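/- For every integer k and every real x, the following identity of formal power series in ℝ[[t]] holds: exp(x·L(t)) · Lif_{k,p,q}(−L(t)) = Σ_{n≥0} Ĉ_{n,p,q}^{(k)}(x) · t^n/n!, where L(t) = Σ_{n≥1} (−1)^{n−1} t^n/n is the formal logarithm log(1+t), so the left-hand side is (1+t)^x·Lif_{k,p,q}(−log(1+t)). -/

import Mathlib

open Finset

/-- The `(p,q)`-integer `[m]_{p,q} = (p^m - q^m)/(p - q)`. -/
noncomputable def pqInt (p q : ℝ) (m : ℕ) : ℝ := (p ^ m - q ^ m) / (p - q)

/-- The exponential generating function `∑ f n * t^n / n!` of a sequence `f`. -/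
noncomputable def egf (f : ℕ → ℝ) : PowerSeries ℝ :=
  PowerSeries.mk fun n => f n / n.factorial

/-- The unsigned Stirling numbers of the first kind, defined by the recurrence
`S1(n+1, m+1) = n * S1(n, m+1) + S1(n, m)`, so that
`x(x+1)⋯(x+n-1) = ∑_{m=0}^{n} S1(n,m) x^m`. -/
def stirling1 : ℕ → ℕ → ℕ
  | 0, 0 => 1
  | 0, _ + 1 => 0
  | _ + 1, 0 => 0
  | n + 1, m + 1 => n * stirling1 n (m + 1) + stirling1 n m

/-- The `(p,q)`-poly-Cauchy polynomials of the first kind. -/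
noncomputable def pqCauchy1 (p q : ℝ) (k : ℤ) (x : ℝ) (n : ℕ) : ℝ :=
  ∑ m ∈ Finset.range (n + 1),
    (-1 : ℝ) ^ (n - m) * (stirling1 n m : ℝ) *
      ∑ l ∈ Finset.range (m + 1),
        (m.choose l : ℝ) * (-x) ^ l / pqInt p q (m - l + 1) ^ k

/-- The `(p,q)`-poly-Cauchy polynomials of the second kind. -/
noncomputable def pqCauchy2 (p q : ℝ) (k : ℤ) (x : ℝ) (n : ℕ) : ℝ :=
  (-1 : ℝ) ^ n *
    ∑ m ∈ Finset.range (n + 1),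
      (stirling1 n m : ℝ) *
        ∑ l ∈ Finset.range (m + 1),
          (m.choose l : ℝ) * (-x) ^ l / pqInt p q (m - l + 1) ^ k

/-- Formal substitution of a power series `S` with zero constant term into the
`k`-th `(p,q)`-polylogarithm factorial function
`Lif_{k,p,q}(s) = ∑_{m ≥ 0} s^m / (m! [m+1]_{p,q}^k)`.
(For `m > n` the series `S^m` has zero `n`-th coefficient, so the sum is finite.) -/
noncomputable def pqLif (p q : ℝ) (k : ℤ) (S : PowerSeries ℝ) : PowerSeries ℝ :=
  PowerSeries.mk fun n =>
    ∑ m ∈ Finset.range (n + 1),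
      PowerSeries.coeff (R := ℝ) n (S ^ m) / ((m.factorial : ℝ) * pqInt p q (m + 1) ^ k)

/-- Formal substitution of a power series `S` with zero constant term into the
exponential series `exp(s) = ∑_{m ≥ 0} s^m / m!`. -/
noncomputable def expComp (S : PowerSeries ℝ) : PowerSeries ℝ :=
  PowerSeries.mk fun n =>
    ∑ m ∈ Finset.range (n + 1), PowerSeries.coeff (R := ℝ) n (S ^ m) / (m.factorial : ℝ)

/-- The formal logarithm `log(1 + t) = ∑_{n ≥ 1} (-1)^(n-1) t^n / n`. -/
noncomputable def logOnePlus : PowerSeries ℝ :=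
  PowerSeries.mk fun n => if n = 0 then 0 else (-1 : ℝ) ^ (n - 1) / n


open PowerSeries in
lemma derivative_logOnePlus :
    PowerSeries.derivative ℝ logOnePlus = PowerSeries.mk fun n => (-1 : ℝ) ^ n := by
  ext n
  rw [PowerSeries.coeff_derivative]
  simp only [logOnePlus, PowerSeries.coeff_mk, Nat.add_eq_zero, one_ne_zero, and_false, if_false,
    Nat.add_sub_cancel]
  push_cast
  field_simp

lemma one_add_X_mul_alt :
    ((1 + PowerSeries.X) * PowerSeries.mk fun n => (-1 : ℝ) ^ n) = 1 := by
  ext n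
  rw [add_mul, one_mul, map_add]
  cases n with
  | zero => simp
  | succ m => simp [PowerSeries.coeff_succ_X_mul, pow_succ]

lemma logPow_rec (n r : ℕ) :
    ((n : ℝ) + 1) * PowerSeries.coeff (R := ℝ) (n + 1) (logOnePlus ^ (r + 1)) +
      (n : ℝ) * PowerSeries.coeff (R := ℝ) n (logOnePlus ^ (r + 1)) =
    ((r : ℝ) + 1) * PowerSeries.coeff (R := ℝ) n (logOnePlus ^ r) := by
  have key : (1 + PowerSeries.X) * PowerSeries.derivative ℝ (logOnePlus ^ (r + 1)) =
      ((r : ℝ) + 1) • logOnePlus ^ r := by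
    rw [Derivation.leibniz_pow, Nat.add_sub_cancel, derivative_logOnePlus]
    rw [smul_eq_mul, mul_smul_comm,
      show ((1 + PowerSeries.X) * (logOnePlus ^ r * PowerSeries.mk fun n => (-1 : ℝ) ^ n)) =
        logOnePlus ^ r * ((1 + PowerSeries.X) * PowerSeries.mk fun n => (-1 : ℝ) ^ n) by ring,
      one_add_X_mul_alt, mul_one, ← Nat.cast_smul_eq_nsmul ℝ]
    push_cast
    ring_nf
  have h := congrArg (PowerSeries.coeff (R := ℝ) n) key
  rw [add_mul, one_mul, map_add] at h
  rw [PowerSeries.coeff_derivative] at h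
  rw [map_smul, smul_eq_mul] at h
  cases n with
  | zero => simpa using h
  | succ m =>
    rw [PowerSeries.coeff_succ_X_mul, PowerSeries.coeff_derivative] at h
    push_cast at h ⊢
    linarith [h]

lemma stirling1_eq_zero : ∀ n r : ℕ, n < r → stirling1 n r = 0
  | 0, _ + 1, _ => rfl
  | n + 1, r + 1, h => by
    rw [stirling1, stirling1_eq_zero n (r + 1) (by omega), stirling1_eq_zero n r (by omega)]
    ring

lemma key_coeff : ∀ n r : ℕ, (n.factorial : ℝ) * PowerSeries.coeff (R := ℝ) n (logOnePlus ^ r) =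
    (-1 : ℝ) ^ (n + r) * r.factorial * stirling1 n r := by
  intro n
  induction n with
  | zero =>
    intro r
    cases r with
    | zero => simp [stirling1]
    | succ m =>
      have : PowerSeries.coeff (R := ℝ) 0 (logOnePlus ^ (m + 1)) = 0 := by
        rw [PowerSeries.coeff_zero_eq_constantCoeff, map_pow]
        have : PowerSeries.constantCoeff (R := ℝ) logOnePlus = 0 := by simp [logOnePlus]
        simp [this]
      simp [this, stirling1]
  | succ n ih =>
    intro r
    cases r with
    | zero =>
      simp only [pow_zero, stirling1, Nat.cast_zero]
      rw [PowerSeries.coeff_one]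
      simp [stirling1]
    | succ r =>
      have hrec := logPow_rec n r
      have h1 := ih r
      have h2 := ih (r + 1)
      have hfac : ((n + 1).factorial : ℝ) = ((n : ℝ) + 1) * n.factorial := by
        push_cast [Nat.factorial_succ]; ring
      have hfacr : ((r + 1).factorial : ℝ) = ((r : ℝ) + 1) * r.factorial := by
        push_cast [Nat.factorial_succ]; ring
      have hst : (stirling1 (n + 1) (r + 1) : ℝ) =
          n * stirling1 n (r + 1) + stirling1 n r := by
        rw [stirling1]; push_cast; ring
      rw [hfac, hfacr, hst]
      have hsign : (-1 : ℝ) ^ (n + 1 + (r + 1)) = (-1 : ℝ) ^ (n + r) := by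
        rw [show n + 1 + (r + 1) = (n + r) + 2 by omega, pow_add]; ring
      rw [hsign]
      have hsign2 : (-1 : ℝ) ^ (n + (r + 1)) = -(-1 : ℝ) ^ (n + r) := by
        rw [← Nat.add_assoc, pow_succ]; ring
      rw [hsign2, hfacr] at h2
      linear_combination (n.factorial : ℝ) * hrec + ((r : ℝ) + 1) * h1 - (n : ℝ) * h2

lemma coeff_logPow_eq_zero {i a : ℕ} (h : i < a) :
    PowerSeries.coeff (R := ℝ) i (logOnePlus ^ a) = 0 := by
  have h1 := key_coeff i a
  rw [stirling1_eq_zero i a h] at h1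
  have h2 : (i.factorial : ℝ) * PowerSeries.coeff (R := ℝ) i (logOnePlus ^ a) = 0 := by
    rw [h1]; simp
  exact (mul_eq_zero.mp h2).resolve_left
    (Nat.cast_ne_zero.mpr i.factorial_ne_zero)

lemma sum_reindex (n : ℕ) (F : ℕ → ℕ → ℝ) (hF : ∀ a b, n < a + b → F a b = 0) :
    ∑ a ∈ Finset.range (n + 1), ∑ b ∈ Finset.range (n + 1), F a b
      = ∑ m ∈ Finset.range (n + 1), ∑ l ∈ Finset.range (m + 1), F l (m - l) := by
  rw [← Finset.sum_product', Finset.sum_sigma']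
  rw [← Finset.sum_filter_of_ne
    (p := fun p : ℕ × ℕ => p.1 + p.2 ≤ n)
    (fun p _ hne => by by_contra hc; exact hne (hF p.1 p.2 (by omega)))]
  refine Finset.sum_nbij' (fun p => ⟨p.1 + p.2, p.1⟩) (fun q => (q.2, q.1 - q.2)) ?_ ?_ ?_ ?_ ?_
  · rintro ⟨a, b⟩ hp
    simp only [Finset.mem_filter, Finset.mem_product, Finset.mem_range] at hp
    simp only [Finset.mem_sigma, Finset.mem_range]
    omega
  · rintro ⟨m, l⟩ hq
    simp only [Finset.mem_sigma, Finset.mem_range] at hq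
    simp only [Finset.mem_filter, Finset.mem_product, Finset.mem_range]
    omega
  · rintro ⟨a, b⟩ _
    simp
  · rintro ⟨m, l⟩ hq
    simp only [Finset.mem_sigma, Finset.mem_range] at hq
    have h1 : l + (m - l) = m := by omega
    simp [h1]
  · rintro ⟨a, b⟩ _
    simp

theorem pqPolyCauchy_second_kind_genFun
    (p q : ℝ) (hq : 0 < q) (hqp : q < p) (hp : p ≤ 1) (k : ℤ) (x : ℝ) :
    expComp (x • logOnePlus) * pqLif p q k (-logOnePlus) = egf (pqCauchy2 p q k x) := by
  have hfacne : ∀ m : ℕ, (m.factorial : ℝ) ≠ 0 :=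
    fun m => Nat.cast_ne_zero.mpr m.factorial_ne_zero
  ext n
  rw [PowerSeries.coeff_mul]
  simp only [egf, PowerSeries.coeff_mk]
  set L := logOnePlus with hLdef
  set P : ℕ → ℝ := fun b => pqInt p q (b + 1) ^ k with hPdef
  have hA : ∀ i : ℕ, i ≤ n → PowerSeries.coeff (R := ℝ) i (expComp (x • L)) =
      ∑ a ∈ Finset.range (n + 1), x ^ a / a.factorial * PowerSeries.coeff (R := ℝ) i (L ^ a) := by
    intro i hi
    rw [expComp, PowerSeries.coeff_mk]
    have e1 : ∀ a : ℕ, PowerSeries.coeff (R := ℝ) i ((x • L) ^ a) / a.factorial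
        = x ^ a / a.factorial * PowerSeries.coeff (R := ℝ) i (L ^ a) := by
      intro a; rw [smul_pow, map_smul, smul_eq_mul]; ring
    rw [Finset.sum_subset (Finset.range_subset_range.mpr (show i + 1 ≤ n + 1 by omega))
      (fun a _ ha => by
        have hia : i < a := by simp only [Finset.mem_range] at ha; omega
        rw [e1, coeff_logPow_eq_zero hia]
        ring)]
    exact Finset.sum_congr rfl fun a _ => e1 a
  have hB : ∀ j : ℕ, j ≤ n → PowerSeries.coeff (R := ℝ) j (pqLif p q k (-L)) =
      ∑ b ∈ Finset.range (n + 1),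
        (-1 : ℝ) ^ b / (b.factorial * P b) * PowerSeries.coeff (R := ℝ) j (L ^ b) := by
    intro j hj
    rw [pqLif, PowerSeries.coeff_mk]
    have e1 : ∀ b : ℕ, PowerSeries.coeff (R := ℝ) j ((-L) ^ b) / (b.factorial * P b)
        = (-1 : ℝ) ^ b / (b.factorial * P b) * PowerSeries.coeff (R := ℝ) j (L ^ b) := by
      intro b
      rw [show -L = (-1 : ℝ) • L from (neg_one_smul ℝ L).symm, smul_pow, map_smul, smul_eq_mul]
      ring
    rw [Finset.sum_subset (Finset.range_subset_range.mpr (show j + 1 ≤ n + 1 by omega))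
      (fun b _ hb => by
        have hjb : j < b := by simp only [Finset.mem_range] at hb; omega
        rw [e1, coeff_logPow_eq_zero hjb]
        ring)]
    exact Finset.sum_congr rfl fun b _ => e1 b
  have step1 : ∑ pr ∈ Finset.HasAntidiagonal.antidiagonal n,
        PowerSeries.coeff (R := ℝ) pr.1 (expComp (x • L)) * PowerSeries.coeff (R := ℝ) pr.2 (pqLif p q k (-L))
      = ∑ a ∈ Finset.range (n + 1), ∑ b ∈ Finset.range (n + 1),
          (x ^ a / a.factorial) * ((-1 : ℝ) ^ b / (b.factorial * P b)) *
            PowerSeries.coeff (R := ℝ) n (L ^ (a + b)) := by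
    have e2 : ∀ pr ∈ Finset.HasAntidiagonal.antidiagonal n,
        PowerSeries.coeff (R := ℝ) pr.1 (expComp (x • L)) * PowerSeries.coeff (R := ℝ) pr.2 (pqLif p q k (-L))
        = ∑ a ∈ Finset.range (n + 1), ∑ b ∈ Finset.range (n + 1),
            (x ^ a / a.factorial * PowerSeries.coeff (R := ℝ) pr.1 (L ^ a)) *
              ((-1 : ℝ) ^ b / (b.factorial * P b) * PowerSeries.coeff (R := ℝ) pr.2 (L ^ b)) := by
      intro pr hpr
      have hpr' := Finset.HasAntidiagonal.mem_antidiagonal.mp hpr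
      rw [hA pr.1 (by omega), hB pr.2 (by omega), Finset.sum_mul_sum]
    rw [Finset.sum_congr rfl e2, Finset.sum_comm]
    refine Finset.sum_congr rfl fun a _ => ?_
    rw [Finset.sum_comm]
    refine Finset.sum_congr rfl fun b _ => ?_
    rw [pow_add, PowerSeries.coeff_mul, mul_assoc, Finset.mul_sum, Finset.mul_sum]
    refine Finset.sum_congr rfl fun pr _ => ?_
    ring
  rw [step1, eq_div_iff (hfacne n), Finset.sum_mul]
  have step2 : ∀ a ∈ Finset.range (n + 1),
      (∑ b ∈ Finset.range (n + 1),
        (x ^ a / a.factorial) * ((-1 : ℝ) ^ b / (b.factorial * P b)) *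
          PowerSeries.coeff (R := ℝ) n (L ^ (a + b))) * (n.factorial : ℝ)
      = ∑ b ∈ Finset.range (n + 1),
          (-1 : ℝ) ^ n *
            ((-x) ^ a * ((a + b).choose a : ℝ) * (stirling1 n (a + b) : ℝ) / P b) := by
    intro a _
    rw [Finset.sum_mul]
    refine Finset.sum_congr rfl fun b _ => ?_
    have hk := key_coeff n (a + b)
    have hP : P b ≠ 0 := by
      have h1 : (0 : ℝ) < pqInt p q (b + 1) := by
        rw [pqInt]
        apply div_pos
        · have := pow_lt_pow_left₀ hqp hq.le (show b + 1 ≠ 0 by omega)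
          linarith
        · linarith
      exact zpow_ne_zero k (ne_of_gt h1)
    have hchoose : (((a + b).choose a : ℝ)) * a.factorial * b.factorial
        = ((a + b).factorial : ℝ) := by
      rw [show ((a + b).choose a : ℝ) = ((a + b).choose b : ℝ) by
        exact_mod_cast congrArg Nat.cast Nat.choose_symm_add]
      exact_mod_cast Nat.add_choose_mul_factorial_mul_factorial a b
    have hsplit : (-1 : ℝ) ^ (n + (a + b)) = (-1) ^ n * (-1) ^ a * (-1) ^ b := by
      rw [← Nat.add_assoc, pow_add, pow_add]
    have hb1 : ((-1 : ℝ) ^ b) * ((-1 : ℝ) ^ b) = 1 := by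
      rw [← mul_pow]; norm_num
    rw [hsplit, ← hLdef] at hk
    have hk2 : PowerSeries.coeff (R := ℝ) n (L ^ (a + b)) =
        (-1) ^ n * (-1) ^ a * (-1) ^ b * ((a + b).factorial : ℝ) * (stirling1 n (a + b) : ℝ) /
          n.factorial := by
      rw [eq_div_iff (hfacne n), mul_comm]; exact hk
    rw [hk2, ← hchoose, neg_pow]
    have hfa := hfacne a
    have hfb := hfacne b
    have hfn := hfacne n
    rcases neg_one_pow_eq_or ℝ b with h | h <;> rw [h] <;> field_simp <;> ring
  rw [Finset.sum_congr rfl step2, pqCauchy2]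
  have hFzero : ∀ a b : ℕ, n < a + b →
      ((-x) ^ a * ((a + b).choose a : ℝ) * (stirling1 n (a + b) : ℝ) / P b) = 0 := by
    intro a b h
    rw [stirling1_eq_zero n (a + b) h]
    simp
  simp only [← Finset.mul_sum]
  congr 1
  rw [sum_reindex n
    (fun a b => (-x) ^ a * ((a + b).choose a : ℝ) * (stirling1 n (a + b) : ℝ) / P b) hFzero]
  refine Finset.sum_congr rfl fun m hm => ?_
  rw [Finset.mul_sum]
  refine Finset.sum_congr rfl fun l hl => ?_
  simp only [Finset.mem_range] at hm hl
  have h1 : l + (m - l) = m := by omega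
  rw [h1]
  simp only [hPdef]
  ring
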